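/- If a nonnegative random variable S has a long-tailed distribution and W is an independent nonnegative random variable, then P(S > x + W) ~ P(S > x) as x → ∞. -/

import Mathlib

open MeasureTheory ProbabilityTheory Filter Topology Set

/-- If `S` has a long-tailed distribution and `W ≥ 0` is independent of `S`, then
`P(S > x + W) ~ P(S > x)` as `x → ∞`. -/
theorem longTailed_shift_by_independent
    {Ω : Type*} [MeasurableSpace Ω] (P : Measure Ω) [IsProbabilityMeasure P]
    (S W : Ω → ℝ) (hSmeas : Measurable S) (hWmeas : Measurable W)
    (hSnonneg : ∀ ω, 0 ≤ S ω) (hWnonneg : ∀ ω, 0 ≤ W ω)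
    (hindep : IndepFun S W P)
    (hpos : ∀ x : ℝ, 0 < P {ω | x < S ω})
    (hlong : ∀ y : ℝ, 0 ≤ y → Filter.Tendsto
      (fun x => (P {ω | x + y < S ω}).toReal / (P {ω | x < S ω}).toReal)
      Filter.atTop (nhds 1)) :
    Filter.Tendsto
      (fun x => (P {ω | x + W ω < S ω}).toReal / (P {ω | x < S ω}).toReal)
      Filter.atTop (nhds 1) := by
  rw [Metric.tendsto_nhds]
  intro ε hε
  set δ := min (ε / 4) (1 / 2) with hδdef
  have hδ : 0 < δ := lt_min (by positivity) (by norm_num)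
  have hδ1 : δ ≤ 1 / 2 := min_le_right _ _
  have hδε : δ ≤ ε / 4 := min_le_left _ _
  -- choose y₀ with P(W > y₀) < δ
  obtain ⟨y₀, hy₀nn, hy₀⟩ : ∃ y₀ : ℝ, 0 ≤ y₀ ∧ (P {ω | y₀ < W ω}).toReal < δ := by
    have hmono : Antitone (fun n : ℕ => {ω | (n : ℝ) < W ω}) := by
      intro m n hmn ω hω
      simp only [mem_setOf_eq] at *
      exact lt_of_le_of_lt (by exact_mod_cast hmn) hω
    have hms : ∀ n : ℕ, NullMeasurableSet {ω | (n : ℝ) < W ω} P := fun n =>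
      (hWmeas measurableSet_Ioi).nullMeasurableSet
    have hIn : (⋂ n : ℕ, {ω | (n : ℝ) < W ω}) = ∅ := by
      ext ω
      simp only [mem_iInter, mem_setOf_eq, mem_empty_iff_false, iff_false, not_forall, not_lt]
      exact ⟨⌈W ω⌉₊, Nat.le_ceil _⟩
    have htend : Tendsto (fun n : ℕ => P {ω | (n : ℝ) < W ω}) atTop (nhds 0) := by
      have := tendsto_measure_iInter_atTop (μ := P) hms hmono ⟨0, measure_ne_top _ _⟩
      rwa [hIn, measure_empty] at this
    have htend' : Tendsto (fun n : ℕ => (P {ω | (n : ℝ) < W ω}).toReal) atTop (nhds 0) := by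
      simpa [Function.comp_def] using (ENNReal.tendsto_toReal (by simp)).comp htend
    obtain ⟨n, hn⟩ := (htend'.eventually_lt_const hδ).exists
    exact ⟨n, Nat.cast_nonneg n, hn⟩
  -- c = P(W ≤ y₀)
  have hcompl : {ω | W ω ≤ y₀} = {ω | y₀ < W ω}ᶜ := by ext ω; simp [not_lt]
  have hmsW : MeasurableSet {ω | y₀ < W ω} := hWmeas measurableSet_Ioi
  have hc : (P {ω | W ω ≤ y₀}).toReal = 1 - (P {ω | y₀ < W ω}).toReal := by
    rw [hcompl, measure_compl hmsW (measure_ne_top _ _), measure_univ,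
      ENNReal.toReal_sub_of_le prob_le_one (by simp), ENNReal.toReal_one]
  have hlong' := (hlong y₀ hy₀nn).eventually_const_lt (show 1 - δ < 1 by linarith)
  filter_upwards [hlong'] with x hx
  set a := (P {ω | x + y₀ < S ω}).toReal
  set b := (P {ω | x < S ω}).toReal
  set c := (P {ω | W ω ≤ y₀}).toReal
  set f := (P {ω | x + W ω < S ω}).toReal
  have hb : 0 < b := ENNReal.toReal_pos (hpos x).ne' (measure_ne_top _ _)
  -- upper bound
  have hfb : f ≤ b := by
    apply ENNReal.toReal_mono (measure_ne_top _ _)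
    exact measure_mono fun ω hω =>
      lt_of_le_of_lt (le_add_of_nonneg_right (hWnonneg ω)) hω
  have hupper : f / b ≤ 1 := div_le_one_of_le₀ hfb hb.le
  -- lower bound via independence
  have hkey : P {ω | x + y₀ < S ω} * P {ω | W ω ≤ y₀} ≤ P {ω | x + W ω < S ω} := by
    have := hindep.measure_inter_preimage_eq_mul (Ioi (x + y₀)) (Iic y₀)
      measurableSet_Ioi measurableSet_Iic
    have hsub : S ⁻¹' Ioi (x + y₀) ∩ W ⁻¹' Iic y₀ ⊆ {ω | x + W ω < S ω} := by
      rintro ω ⟨h1, h2⟩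
      simp only [mem_preimage, mem_Ioi, mem_Iic] at h1 h2
      exact lt_of_le_of_lt (by linarith) h1
    calc P {ω | x + y₀ < S ω} * P {ω | W ω ≤ y₀}
        = P (S ⁻¹' Ioi (x + y₀) ∩ W ⁻¹' Iic y₀) := this.symm
      _ ≤ P {ω | x + W ω < S ω} := measure_mono hsub
  have hkey' : a * c ≤ f := by
    have := ENNReal.toReal_mono (measure_ne_top _ _) hkey
    rwa [ENNReal.toReal_mul] at this
  have ha_nonneg : 0 ≤ a := ENNReal.toReal_nonneg
  have hWnn : 0 ≤ (P {ω | y₀ < W ω}).toReal := ENNReal.toReal_nonneg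
  have hab : 1 - δ < a / b := hx
  have hflb : (1 - δ) * (1 - δ) < f / b := by
    have hc' : 1 - δ < c := by rw [hc]; linarith
    have h1 : (1 - δ) * (1 - δ) < (a / b) * c := by
      apply mul_lt_mul' hab.le hc' (by linarith) (by linarith)
    have h2 : (a / b) * c ≤ f / b := by
      rw [div_mul_eq_mul_div]
      gcongr
    linarith
  rw [Real.dist_eq, abs_sub_lt_iff]
  constructor <;> nlinarith
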